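/- In the base graph G₀ on layers 0,...,D with vertex set (Z/(3Dr)Z)^d per layer and edges v_x^i → v_{x+γ}^{i+1} for γ ∈ V_d⁺(r), the path v_x^0, v_{x+γ}^1, ..., v_{x+Dγ}^D is the unique path from v_x^0 to v_{x+Dγ}^D, for every x and every γ ∈ V_d⁺(r). -/

import Mathlib

/-- `V_d⁺(r)`: lattice points of `ℤ^d` with nonnegative coordinates that are vertices
(extreme points) of the convex hull of `{p ∈ ℤ^d : ‖p‖ ≤ r}`. -/
def Vdplus (d r : ℕ) : Set (Fin d → ℤ) :=
  {γ | (∀ i, 0 ≤ γ i) ∧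
    (fun i => (γ i : ℝ)) ∈ Set.extremePoints ℝ (convexHull ℝ
      {x : Fin d → ℝ | ∃ q : Fin d → ℤ,
        (∑ i, (q i : ℝ) ^ 2) ≤ (r : ℝ) ^ 2 ∧ x = fun i => (q i : ℝ)})}

/-- Coordinates of elements of `Vdplus d r` are between `0` and `r`. -/
lemma Vdplus_bounds {d r : ℕ} {γ : Fin d → ℤ} (hγ : γ ∈ Vdplus d r) (j : Fin d) :
    0 ≤ γ j ∧ γ j ≤ (r : ℤ) := by
  obtain ⟨hnn, hext⟩ := hγ
  have hmem := extremePoints_convexHull_subset hext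
  obtain ⟨q, hq, heq⟩ := hmem
  have hqγ : q = γ := by
    funext i
    exact_mod_cast (congrFun heq.symm i)
  subst hqγ
  have h1 : ((q j : ℝ)) ^ 2 ≤ (r : ℝ) ^ 2 := by
    refine le_trans ?_ hq
    exact Finset.single_le_sum (f := fun i => ((q i : ℝ))^2) (fun i _ => sq_nonneg _)
      (Finset.mem_univ j)
  have h0 : (0 : ℝ) ≤ (q j : ℝ) := by exact_mod_cast hnn j
  have : (q j : ℝ) ≤ (r : ℝ) := by nlinarith
  exact ⟨hnn j, by exact_mod_cast this⟩

/-- An extreme point which is the average of `D` points of a convex set equals each of them. -/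
lemma extreme_avg {E : Type*} [AddCommGroup E] [Module ℝ E] {A : Set E} {g : E}
    (hA : Convex ℝ A) (hg : g ∈ Set.extremePoints ℝ A)
    {D : ℕ} (hD : 0 < D) (f : Fin D → E) (hf : ∀ k, f k ∈ A)
    (hsum : ∑ k, f k = (D : ℝ) • g) (k : Fin D) : f k = g := by
  by_cases hD1 : D = 1
  · subst hD1
    have hk : k = 0 := Subsingleton.elim _ _
    have : f 0 = (1 : ℝ) • g := by
      simpa [Fin.sum_univ_one] using hsum
    rw [hk, this, one_smul]
  · have hD2 : 2 ≤ D := by omega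
    have hDpos : (0 : ℝ) < (D : ℝ) := by exact_mod_cast hD
    have hDne : ((D : ℝ) - 1) ≠ 0 := by
      have : (2 : ℝ) ≤ (D : ℝ) := by exact_mod_cast hD2
      linarith
    have hDne' : (0 : ℝ) < (D : ℝ) - 1 := by
      have : (2 : ℝ) ≤ (D : ℝ) := by exact_mod_cast hD2
      linarith
    set q : E := ((D : ℝ) - 1)⁻¹ • ∑ j ∈ Finset.univ.erase k, f j with hqdef
    have hcard : (Finset.univ.erase k).card = D - 1 := by
      rw [Finset.card_erase_of_mem (Finset.mem_univ k), Finset.card_univ, Fintype.card_fin]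
    have hqA : q ∈ A := by
      have hmem := hA.sum_mem (t := Finset.univ.erase k)
        (w := fun _ => ((D : ℝ) - 1)⁻¹) (z := f)
        (fun i _ => by positivity)
        (by
          rw [Finset.sum_const, hcard, nsmul_eq_mul]
          have hc : ((D - 1 : ℕ) : ℝ) = (D : ℝ) - 1 := by
            push_cast [Nat.cast_sub (by omega : 1 ≤ D)]; ring
          rw [hc, mul_inv_cancel₀ hDne])
        (fun i _ => hf i)
      have hq2 : q = ∑ i ∈ Finset.univ.erase k, ((D : ℝ) - 1)⁻¹ • f i := by
        rw [hqdef, Finset.smul_sum]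
      rw [hq2]
      exact hmem
    have hsplit : ∑ j ∈ Finset.univ.erase k, f j = (D : ℝ) • g - f k := by
      have h := Finset.add_sum_erase Finset.univ f (Finset.mem_univ k)
      rw [hsum] at h
      exact eq_sub_of_add_eq' h
    have hopen : g ∈ openSegment ℝ (f k) q := by
      refine ⟨1 / (D : ℝ), ((D : ℝ) - 1) / (D : ℝ), by positivity, by positivity,
        by field_simp; ring, ?_⟩
      rw [hqdef, hsplit, smul_smul]
      have hco : ((D : ℝ) - 1) / (D : ℝ) * ((D : ℝ) - 1)⁻¹ = 1 / (D : ℝ) := by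
        field_simp
      rw [hco, smul_sub, ← add_sub_assoc, smul_smul]
      have : (1 / (D : ℝ)) * (D : ℝ) = 1 := by field_simp
      rw [this, one_smul]
      abel
    exact ((mem_extremePoints.mp hg).2 (f k) (hf k) q hqA hopen).1

/-- In the base graph `G₀` (layers `0..D`, each layer a copy of
`(ℤ/(3Dr)ℤ)^d`, edges from `v_x^i` to `v_{x+γ}^{i+1}` for `γ ∈ V_d⁺(r)`), every path
from `v_x^0` to `v_{x+Dγ}^D` is the critical path: its vertex in layer `i` is
`v_{x+iγ}^i`. -/
theorem stmt5 (D r d : ℕ) (hD : 0 < D) (hr : 0 < r) (hd : 0 < d)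
    (x : Fin d → ZMod (3 * D * r)) (γ : Fin d → ℤ) (hγ : γ ∈ Vdplus d r)
    (z : Fin (D + 1) → Fin d → ZMod (3 * D * r))
    (step : Fin D → Fin d → ℤ) (hstep : ∀ k, step k ∈ Vdplus d r)
    (hz0 : z 0 = x)
    (hzD : z (Fin.last D) = fun i => x i + (((D : ℤ) * γ i : ℤ) : ZMod (3 * D * r)))
    (hpath : ∀ k : Fin D,
      z k.succ = fun i => z k.castSucc i + ((step k i : ℤ) : ZMod (3 * D * r))) :
    ∀ i : Fin (D + 1), z i = fun j => x j + ((((i : ℕ) : ℤ) * γ j : ℤ) : ZMod (3 * D * r)) := by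
  classical
  -- extended step function
  set stepZ : ℕ → Fin d → ℤ := fun k => if h : k < D then step ⟨k, h⟩ else 0 with hstepZ
  -- z along the path is x plus the partial sums of steps
  have key : ∀ i : Fin (D + 1),
      z i = fun j => x j + (((∑ k ∈ Finset.range (i : ℕ), stepZ k j : ℤ)) : ZMod (3 * D * r)) := by
    intro i
    induction i using Fin.induction with
    | zero => simpa using hz0
    | succ i ih =>
      rw [hpath i]
      funext j
      have hiv : ((i.succ : Fin (D+1)) : ℕ) = (i : ℕ) + 1 := rfl
      have hcv : ((i.castSucc : Fin (D+1)) : ℕ) = (i : ℕ) := rfl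
      rw [ih]
      simp only [hiv, hcv, Finset.sum_range_succ]
      have hsz : stepZ (i : ℕ) j = step i j := by
        rw [hstepZ]
        simp [i.isLt]
      rw [hsz]
      push_cast
      ring
  -- the sum of the steps equals D • γ coordinatewise
  have hsum : ∀ j, ∑ k ∈ Finset.range D, stepZ k j = (D : ℤ) * γ j := by
    intro j
    have hDlast : ((Fin.last D : Fin (D+1)) : ℕ) = D := rfl
    have h1 := congrFun (key (Fin.last D)) j
    rw [hzD] at h1
    have h2 : (((D : ℤ) * γ j : ℤ) : ZMod (3 * D * r))
        = (((∑ k ∈ Finset.range D, stepZ k j : ℤ)) : ZMod (3 * D * r)) := by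
      have := h1
      simp only [hDlast] at this
      exact add_left_cancel this
    have h3 : (((∑ k ∈ Finset.range D, stepZ k j) - (D : ℤ) * γ j : ℤ) : ZMod (3 * D * r)) = 0 := by
      rw [Int.cast_sub, sub_eq_zero]
      exact h2.symm
    have hdvd : ((3 * D * r : ℕ) : ℤ) ∣ ((∑ k ∈ Finset.range D, stepZ k j) - (D : ℤ) * γ j) :=
      (ZMod.intCast_zmod_eq_zero_iff_dvd _ _).mp h3
    -- bounds
    have hub : ∑ k ∈ Finset.range D, stepZ k j ≤ (D : ℤ) * r := by
      calc ∑ k ∈ Finset.range D, stepZ k j ≤ ∑ _k ∈ Finset.range D, (r : ℤ) := by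
            refine Finset.sum_le_sum fun k hk => ?_
            have hkD : k < D := Finset.mem_range.mp hk
            have := (Vdplus_bounds (hstep ⟨k, hkD⟩) j).2
            simpa [stepZ, hkD] using this
        _ = (D : ℤ) * r := by
            rw [Finset.sum_const, Finset.card_range, nsmul_eq_mul]
    have hlb : 0 ≤ ∑ k ∈ Finset.range D, stepZ k j := by
      refine Finset.sum_nonneg fun k hk => ?_
      have hkD : k < D := Finset.mem_range.mp hk
      have := (Vdplus_bounds (hstep ⟨k, hkD⟩) j).1
      simpa [stepZ, hkD] using this
    have hγ1 : 0 ≤ γ j := (Vdplus_bounds hγ j).1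
    have hγ2 : γ j ≤ (r : ℤ) := (Vdplus_bounds hγ j).2
    have hub2 : (D : ℤ) * γ j ≤ (D : ℤ) * r := by
      have : (0:ℤ) ≤ (D:ℤ) := by exact_mod_cast Nat.zero_le D
      exact mul_le_mul_of_nonneg_left hγ2 this
    have hlb2 : 0 ≤ (D : ℤ) * γ j := by positivity
    have hDrpos : (0:ℤ) < (D : ℤ) * r := by
      have h1 : (0:ℤ) < (D:ℤ) := by exact_mod_cast hD
      have h2 : (0:ℤ) < (r:ℤ) := by exact_mod_cast hr
      positivity
    have habs : |(∑ k ∈ Finset.range D, stepZ k j) - (D : ℤ) * γ j| < ((3 * D * r : ℕ) : ℤ) := by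
      rw [abs_lt]
      push_cast
      constructor <;> nlinarith
    have := Int.eq_zero_of_abs_lt_dvd hdvd habs
    linarith
  -- sum over Fin D
  have hsumFin : ∑ k : Fin D, (fun i => ((step k i : ℝ))) = fun i => (D : ℝ) • ((γ i : ℝ)) := by
    funext i
    rw [Finset.sum_apply]
    have h1 : ∑ k : Fin D, ((step k i : ℝ)) = (((∑ k ∈ Finset.range D, stepZ k i : ℤ)) : ℝ) := by
      push_cast
      rw [← Fin.sum_univ_eq_sum_range (fun m => ((stepZ m i : ℝ)))]
      refine Finset.sum_congr rfl fun k _ => ?_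
      simp [stepZ, k.isLt]
    rw [h1, hsum i, smul_eq_mul]
    push_cast
    ring
  -- every step equals γ
  have hsteq : ∀ k : Fin D, step k = γ := by
    intro k
    have hEA : (fun i => ((step k i : ℝ))) = (fun i => ((γ i : ℝ))) := by
      refine extreme_avg (convex_convexHull ℝ _) hγ.2 hD
        (fun k => (fun i => ((step k i : ℝ)))) (fun k => (hstep k).2.1) ?_ k
      rw [hsumFin]
      funext i
      simp [Pi.smul_apply]
    funext j
    exact_mod_cast congrFun hEA j
  -- conclude
  intro i
  rw [key i]
  funext j
  have hstep' : ∀ k ∈ Finset.range (i : ℕ), stepZ k j = γ j := by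
    intro k hk
    have hkD : k < D := lt_of_lt_of_le (Finset.mem_range.mp hk) (Nat.lt_succ_iff.mp i.isLt)
    simp [stepZ, hkD, hsteq ⟨k, hkD⟩]
  rw [Finset.sum_congr rfl hstep', Finset.sum_const, Finset.card_range, nsmul_eq_mul]
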